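/- Let u_1,…,u_k be unit vectors in ℝ^n with λ_i > 0, ∑ λ_i u_i u_i^T = I_n, and ∑ λ_i u_i = 0. If x ∈ ℝ^n satisfies ⟨x, u_i⟩ ≤ 1 for all i, then ‖x‖ ≤ n. -/

import Mathlib

open scoped RealInnerProductSpace
open Matrix

/-- Core inequality of Fritz John's theorem: under the John conditions, any `x` in the polar
of the convex hull of the contact points satisfies `‖x‖ ≤ n`. -/
theorem polar_subset_ball_radius_n
    (n k : ℕ) (u : Fin k → EuclideanSpace ℝ (Fin n)) (lam : Fin k → ℝ)
    (hlam : ∀ i, 0 < lam i) (hu : ∀ i, ‖u i‖ = 1)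
    (hsum : ∑ i, lam i • Matrix.vecMulVec (u i) (u i) = (1 : Matrix (Fin n) (Fin n) ℝ))
    (hcen : ∑ i, lam i • u i = 0)
    (x : EuclideanSpace ℝ (Fin n)) (hx : ∀ i, ⟪x, u i⟫ ≤ 1) :
    ‖x‖ ≤ n := by
  set t : Fin k → ℝ := fun i => ⟪x, u i⟫ with ht
  have hentry : ∀ a b : Fin n, ∑ i, lam i * (u i a * u i b) = if a = b then (1:ℝ) else 0 := by
    intro a b
    have h := congrFun (congrFun hsum a) b
    simpa [Matrix.sum_apply, Matrix.vecMulVec_apply, Matrix.one_apply, smul_eq_mul] using h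
  have hinner : ∀ (y z : EuclideanSpace ℝ (Fin n)), ⟪y, z⟫ = ∑ a, y a * z a := by
    intro y z
    simp [PiLp.inner_apply, RCLike.inner_apply, conj_trivial, mul_comm]
  -- sum of lambdas equals n
  have hlamsum : ∑ i, lam i = (n : ℝ) := by
    have huu : ∀ i, ∑ a, u i a * u i a = 1 := by
      intro i
      have := real_inner_self_eq_norm_sq (u i)
      rw [hinner] at this
      simp [hu i] at this
      simpa using this
    calc ∑ i, lam i = ∑ i, lam i * ∑ a, u i a * u i a := by
          simp [huu]
      _ = ∑ i, ∑ a, lam i * (u i a * u i a) := by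
          simp [Finset.mul_sum]
      _ = ∑ a : Fin n, ∑ i, lam i * (u i a * u i a) := Finset.sum_comm
      _ = ∑ a : Fin n, (1:ℝ) := by simp [hentry]
      _ = (n : ℝ) := by simp
  -- sum lam t = 0
  have hzero : ∑ i, lam i * t i = 0 := by
    have : ⟪x, ∑ i, lam i • u i⟫ = ∑ i, lam i * t i := by
      rw [inner_sum]
      simp [ht, real_inner_smul_right, Finset.mul_sum, mul_comm, mul_left_comm]
    rw [hcen] at this
    simpa using this.symm
  -- sum lam t^2 = ‖x‖^2
  have hsq : ∑ i, lam i * t i ^ 2 = ‖x‖ ^ 2 := by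
    have hxn : ‖x‖ ^ 2 = ∑ a, x a * x a := by
      rw [← real_inner_self_eq_norm_sq, hinner]
    calc ∑ i, lam i * t i ^ 2
        = ∑ i, lam i * ((∑ a, x a * u i a) * (∑ b, x b * u i b)) := by
          apply Finset.sum_congr rfl; intro i _
          rw [ht]; simp only []; rw [hinner]; ring
      _ = ∑ i, ∑ a, ∑ b, (x a * x b) * (lam i * (u i a * u i b)) := by
          apply Finset.sum_congr rfl; intro i _
          rw [Finset.sum_mul_sum, Finset.mul_sum]
          apply Finset.sum_congr rfl; intro a _
          rw [Finset.mul_sum]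
          apply Finset.sum_congr rfl; intro b _
          ring
      _ = ∑ a, ∑ b, (x a * x b) * ∑ i, lam i * (u i a * u i b) := by
          rw [Finset.sum_comm]
          apply Finset.sum_congr rfl; intro a _
          rw [Finset.sum_comm]
          apply Finset.sum_congr rfl; intro b _
          rw [Finset.mul_sum]
      _ = ∑ a, x a * x a := by
          apply Finset.sum_congr rfl; intro a _
          simp [hentry, Finset.sum_ite_eq]
      _ = ‖x‖ ^ 2 := hxn.symm
  -- nonnegativity of the key sum
  have habs : ∀ i, |t i| ≤ ‖x‖ := by
    intro i
    have := abs_real_inner_le_norm x (u i)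
    simpa [ht, hu i] using this
  have hkey : 0 ≤ ∑ i, lam i * ((1 - t i) * (‖x‖ + t i)) := by
    apply Finset.sum_nonneg
    intro i _
    apply mul_nonneg (hlam i).le
    apply mul_nonneg
    · linarith [hx i]
    · have := (abs_le.mp (habs i)).1
      linarith
  have hexpand : ∑ i, lam i * ((1 - t i) * (‖x‖ + t i))
      = (∑ i, lam i) * ‖x‖ + (∑ i, lam i * t i) - ‖x‖ * (∑ i, lam i * t i)
        - ∑ i, lam i * t i ^ 2 := by
    have h : ∀ i, lam i * ((1 - t i) * (‖x‖ + t i))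
        = lam i * ‖x‖ + lam i * t i - ‖x‖ * (lam i * t i) - lam i * t i ^ 2 := fun i => by ring
    simp only [h, Finset.sum_sub_distrib, Finset.sum_add_distrib, ← Finset.sum_mul,
      ← Finset.mul_sum]
  rw [hexpand, hlamsum, hzero, hsq] at hkey
  have hfin : ‖x‖ ^ 2 ≤ (n : ℝ) * ‖x‖ := by linarith
  rcases eq_or_lt_of_le (norm_nonneg x) with h0 | h0
  · rw [← h0]; exact_mod_cast Nat.cast_nonneg n
  · nlinarith
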